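/- Let k ≥ 2 and let Θ_i : E_i → E_{i+1} (i = 1, …, k) be contractions between complex Hilbert spaces, Θ := Θ_k ⋯ Θ_1. Fix integers 0 = j_0 < j_1 < ⋯ < j_r = k and for m = 1, …, r set Θ_{J_m} := Θ_{j_m} ⋯ Θ_{j_{m-1}+1}. Then the factorization Θ = Θ_k ⋯ Θ_1 is k-regular if and only if the aggregated factorization Θ = Θ_{J_r} ⋯ Θ_{J_1} is r-regular and, for every m = 1, …, r, the factorization Θ_{J_m} = Θ_{j_m} ⋯ Θ_{j_{m-1}+1} is (j_m − j_{m-1})-regular. -/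

import Mathlib

noncomputable section
open ContinuousLinearMap

section Defect
variable {H K : Type*} [NormedAddCommGroup H] [InnerProductSpace ℂ H] [CompleteSpace H]
  [NormedAddCommGroup K] [InnerProductSpace ℂ K] [CompleteSpace K]

/-- The defect operator `Δ_A := (I - A*A)^{1/2}` of a contraction `A : H → K`. -/
noncomputable def defect (A : H →L[ℂ] K) : H →L[ℂ] H :=
  CFC.sqrt (1 - (ContinuousLinearMap.adjoint A).comp A)

/-- Closure of the range of an operator, as a submodule. -/
noncomputable def clRan (A : H →L[ℂ] K) : Submodule ℂ K :=
  (LinearMap.range (A : H →ₗ[ℂ] K)).topologicalClosure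

theorem defect_mem_clRan (A : H →L[ℂ] K) (x : H) : defect A x ∈ clRan (defect A) :=
  Submodule.le_topologicalClosure _ (LinearMap.mem_range_self (defect A : H →ₗ[ℂ] H) x)

instance clRan_completeSpace (A : H →L[ℂ] K) : CompleteSpace (clRan A) :=
  (Submodule.isClosed_topologicalClosure _).isComplete.completeSpace_coe
end Defect
section Chain
variable {E : ℕ → Type*} [∀ n, NormedAddCommGroup (E n)] [∀ n, InnerProductSpace ℂ (E n)]
  [∀ n, CompleteSpace (E n)]

/-- Transport along an equality of indices. -/
def castCLM {a b : ℕ} (h : a = b) : E a →L[ℂ] E b := by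
  subst h; exact ContinuousLinearMap.id ℂ (E a)

/-- `segProd Θ a m = Θ_{a+m} ∘ ⋯ ∘ Θ_{a+1} : E a → E (a+m)` (in `1`-based notation):
the composition of `m` successive operators of the chain starting at index `a`. -/
noncomputable def segProd (Θ : ∀ n, E n →L[ℂ] E (n + 1)) (a : ℕ) :
    ∀ m : ℕ, E a →L[ℂ] E (a + m)
  | 0 => ContinuousLinearMap.id ℂ (E a)
  | m + 1 => (Θ (a + m)).comp (segProd Θ a m)

/-- `chainProd Θ a b : E a → E b` is the composition of the operators of the chain
leading from `E a` to `E b` (for `a ≤ b`; junk value `0` otherwise). -/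
noncomputable def chainProd (Θ : ∀ n, E n →L[ℂ] E (n + 1)) (a b : ℕ) : E a →L[ℂ] E b :=
  if h : a ≤ b then (castCLM (Nat.add_sub_cancel' h)).comp (segProd Θ a (b - a)) else 0

/-- The tuple `(Δ_k Θ_{k-1}⋯Θ_1 f, …, Δ_2 Θ_1 f, Δ_1 f)` (component `i : Fin k`
corresponds to the `(i+1)`-st factor, in `1`-based notation) in the Hilbert (ℓ²)
direct sum of the closures of the ranges of the defect operators of the factors. -/
noncomputable def regTuple (Θ : ∀ n, E n →L[ℂ] E (n + 1)) (k : ℕ) (f : E 0) :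
    PiLp 2 (fun i : Fin k => clRan (defect (Θ (i : ℕ)))) :=
  WithLp.toLp 2 (fun i => ⟨defect (Θ (i : ℕ)) (chainProd Θ 0 (i : ℕ) f), defect_mem_clRan _ _⟩)

/-- `k`-regularity of the factorization `Θ_k ⋯ Θ_1`: the set
`{Δ_k Θ_{k-1}⋯Θ_1 f ⊕ ⋯ ⊕ Δ_2 Θ_1 f ⊕ Δ_1 f : f ∈ E_1}` is dense in the Hilbert
direct sum `(cl ran Δ_k) ⊕ ⋯ ⊕ (cl ran Δ_1)`. -/
def IsRegularFact (Θ : ∀ n, E n →L[ℂ] E (n + 1)) (k : ℕ) : Prop :=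
  DenseRange (regTuple Θ k)

end Chain

set_option linter.unusedSectionVars false
set_option maxHeartbeats 1000000

section DefectAux
variable {H K : Type*} [NormedAddCommGroup H] [InnerProductSpace ℂ H] [CompleteSpace H]
  [NormedAddCommGroup K] [InnerProductSpace ℂ K] [CompleteSpace K]

lemma aux_isSelfAdjoint_one_sub (A : H →L[ℂ] K) :
    IsSelfAdjoint (1 - (ContinuousLinearMap.adjoint A).comp A) := by
  have h : IsSelfAdjoint ((ContinuousLinearMap.adjoint A).comp A) := by
    rw [IsSelfAdjoint, ContinuousLinearMap.star_eq_adjoint, ContinuousLinearMap.adjoint_comp,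
      ContinuousLinearMap.adjoint_adjoint]
  exact (IsSelfAdjoint.one (R := H →L[ℂ] H)).sub h

lemma aux_nonneg_one_sub (A : H →L[ℂ] K) (hA : ‖A‖ ≤ 1) :
    0 ≤ 1 - (ContinuousLinearMap.adjoint A).comp A := by
  rw [ContinuousLinearMap.nonneg_iff_isPositive, ContinuousLinearMap.isPositive_def']
  refine ⟨aux_isSelfAdjoint_one_sub A, fun x => ?_⟩
  rw [ContinuousLinearMap.reApplyInnerSelf_apply]
  have h1 : ((1 - (ContinuousLinearMap.adjoint A).comp A) x)
      = x - ContinuousLinearMap.adjoint A (A x) := rfl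
  rw [h1, inner_sub_left]
  have h2 : (inner ℂ ((ContinuousLinearMap.adjoint A) (A x)) x : ℂ) = inner ℂ (A x) (A x) :=
    ContinuousLinearMap.adjoint_inner_left A x (A x)
  rw [h2, map_sub, ← norm_sq_eq_re_inner (𝕜 := ℂ), ← norm_sq_eq_re_inner (𝕜 := ℂ)]
  have : ‖A x‖ ≤ ‖x‖ := by
    calc ‖A x‖ ≤ ‖A‖ * ‖x‖ := A.le_opNorm x
    _ ≤ 1 * ‖x‖ := by gcongr
    _ = ‖x‖ := one_mul _
  nlinarith [norm_nonneg (A x), norm_nonneg x]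

lemma aux_defect_selfAdjoint (A : H →L[ℂ] K) : IsSelfAdjoint (defect A) := by
  have := CFC.sqrt_nonneg (a := 1 - (ContinuousLinearMap.adjoint A).comp A)
  rw [ContinuousLinearMap.nonneg_iff_isPositive] at this
  exact this.isSelfAdjoint

lemma aux_defect_comp_defect (A : H →L[ℂ] K) (hA : ‖A‖ ≤ 1) :
    (defect A).comp (defect A) = 1 - (ContinuousLinearMap.adjoint A).comp A := by
  have h := CFC.sq_sqrt (1 - (ContinuousLinearMap.adjoint A).comp A) (aux_nonneg_one_sub A hA)
  rw [pow_two] at h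
  exact h

lemma aux_norm_defect_sq (A : H →L[ℂ] K) (hA : ‖A‖ ≤ 1) (x : H) :
    ‖defect A x‖ ^ 2 = ‖x‖ ^ 2 - ‖A x‖ ^ 2 := by
  have h1 : (inner ℂ (defect A x) (defect A x) : ℂ) = inner ℂ ((defect A) ((defect A) x)) x := by
    rw [← ContinuousLinearMap.adjoint_inner_left]
    congr 1
    exact congrFun (congrArg _ (aux_defect_selfAdjoint A)) _
  have h2 : (defect A) ((defect A) x) = x - ContinuousLinearMap.adjoint A (A x) := by
    have h3 := congrFun (congrArg DFunLike.coe (aux_defect_comp_defect A hA)) x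
    simpa using h3
  have h4 : (inner ℂ (defect A x) (defect A x) : ℂ) = inner ℂ x x - inner ℂ (A x) (A x) := by
    rw [h1, h2, inner_sub_left, ContinuousLinearMap.adjoint_inner_left]
  have hre := congrArg RCLike.re h4
  rw [← norm_sq_eq_re_inner (𝕜 := ℂ), map_sub, ← norm_sq_eq_re_inner (𝕜 := ℂ),
    ← norm_sq_eq_re_inner (𝕜 := ℂ)] at hre
  linarith [hre]

end DefectAux

section ChainAux
variable {E : ℕ → Type*} [∀ n, NormedAddCommGroup (E n)] [∀ n, InnerProductSpace ℂ (E n)]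
  [∀ n, CompleteSpace (E n)]

variable (Θ : ∀ n, E n →L[ℂ] E (n + 1))

lemma castCLM_segProd {a b : ℕ} (m m' : ℕ) (hm : m = m') (h : a + m = b) (h' : a + m' = b) :
    (castCLM (E := E) h).comp (segProd Θ a m) = (castCLM h').comp (segProd Θ a m') := by
  subst hm; rfl

lemma chainProd_self (a : ℕ) : chainProd Θ a a = ContinuousLinearMap.id ℂ (E a) := by
  rw [chainProd, dif_pos le_rfl,
    castCLM_segProd Θ (a - a) 0 (Nat.sub_self a) _ (by omega)]
  rfl

lemma chainProd_succ {a b : ℕ} (h : a ≤ b) :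
    chainProd Θ a (b + 1) = (Θ b).comp (chainProd Θ a b) := by
  obtain ⟨c, rfl⟩ := Nat.le.dest h
  rw [chainProd, dif_pos (by omega), chainProd, dif_pos (by omega),
    castCLM_segProd Θ (a + c + 1 - a) (c + 1) (by omega) _ (by omega),
    castCLM_segProd Θ (a + c - a) c (by omega) _ (by omega)]
  rfl

lemma chainProd_comp {a b c : ℕ} (hab : a ≤ b) (hbc : b ≤ c) :
    chainProd Θ a c = (chainProd Θ b c).comp (chainProd Θ a b) := by
  induction c, hbc using Nat.le_induction with
  | base => rw [chainProd_self]; rfl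
  | succ c hbc ih =>
      rw [chainProd_succ Θ (le_trans hab hbc), chainProd_succ Θ hbc, ih,
        ContinuousLinearMap.comp_assoc]

lemma chainProd_shift (a : ℕ) (t : ℕ) :
    chainProd (fun s => Θ (a + s)) 0 t = chainProd Θ a (a + t) := by
  induction t with
  | zero => exact (chainProd_self _ 0).trans (chainProd_self Θ a).symm
  | succ t ih =>
      rw [chainProd_succ (fun s => Θ (a + s)) (Nat.zero_le t), ih]
      exact (chainProd_succ Θ (Nat.le_add_right a t)).symm

lemma chainProd_cast {a a' b : ℕ} (h : a = a') (v : E a) :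
    chainProd Θ a' b (castCLM h v) = chainProd Θ a b v := by subst h; rfl

lemma castCLM_castCLM {a b : ℕ} (h : a = b) (v : E b) :
    castCLM (E := E) h (castCLM h.symm v) = v := by subst h; rfl

lemma norm_chainProd_le {a b : ℕ} (hab : a ≤ b) (hc : ∀ i, a ≤ i → i < b → ‖Θ i‖ ≤ 1) :
    ‖chainProd Θ a b‖ ≤ 1 := by
  induction b, hab using Nat.le_induction with
  | base => rw [chainProd_self]; exact ContinuousLinearMap.norm_id_le
  | succ b hab ih =>
      rw [chainProd_succ Θ hab]
      calc ‖(Θ b).comp (chainProd Θ a b)‖ ≤ ‖Θ b‖ * ‖chainProd Θ a b‖ :=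
            ContinuousLinearMap.opNorm_comp_le _ _
      _ ≤ 1 * 1 := by
          have h1 := hc b hab (by omega)
          have h2 := ih (fun i hi hi' => hc i hi (by omega))
          exact mul_le_mul h1 h2 (norm_nonneg _) zero_le_one
      _ = 1 := one_mul 1

lemma sum_norm_defect {a b : ℕ} (hab : a ≤ b) (hc : ∀ i, a ≤ i → i < b → ‖Θ i‖ ≤ 1) (x : E a) :
    ∑ t ∈ Finset.range (b - a), ‖defect (Θ (a + t)) (chainProd Θ a (a + t) x)‖ ^ 2
      = ‖x‖ ^ 2 - ‖chainProd Θ a b x‖ ^ 2 := by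
  induction b, hab using Nat.le_induction with
  | base =>
      rw [Nat.sub_self, Finset.range_zero, Finset.sum_empty, chainProd_self]
      simp
  | succ b hab ih =>
      have hb1 : b + 1 - a = (b - a) + 1 := by omega
      have hba : a + (b - a) = b := by omega
      rw [hb1, Finset.sum_range_succ, hba,
        ih (fun i hi hi' => hc i hi (by omega)),
        aux_norm_defect_sq (Θ b) (hc b hab (by omega)) (chainProd Θ a b x),
        chainProd_succ Θ hab]
      have : (Θ b).comp (chainProd Θ a b) x = Θ b (chainProd Θ a b x) := rfl
      rw [this]
      ring

lemma regTuple_sub (n : ℕ) (f g : E 0) :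
    regTuple Θ n f - regTuple Θ n g = regTuple Θ n (f - g) := by
  ext1 i
  refine Subtype.ext ?_
  have h0 : (regTuple Θ n f - regTuple Θ n g) i = regTuple Θ n f i - regTuple Θ n g i := rfl
  rw [h0, AddSubgroupClass.coe_sub]
  show defect (Θ ↑i) (chainProd Θ 0 ↑i f) - defect (Θ ↑i) (chainProd Θ 0 ↑i g)
    = defect (Θ ↑i) (chainProd Θ 0 ↑i (f - g))
  rw [map_sub, map_sub]

lemma norm_regTuple_sq (n : ℕ) (hc : ∀ i, i < n → ‖Θ i‖ ≤ 1) (f : E 0) :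
    ‖regTuple Θ n f‖ ^ 2 = ‖f‖ ^ 2 - ‖chainProd Θ 0 n f‖ ^ 2 := by
  rw [PiLp.norm_sq_eq_of_L2]
  have h1 : ∀ i : Fin n, ‖regTuple Θ n f i‖ ^ 2
      = ‖defect (Θ ↑i) (chainProd Θ 0 ↑i f)‖ ^ 2 := fun i => rfl
  rw [Finset.sum_congr rfl (fun i _ => h1 i)]
  have h2 := sum_norm_defect Θ (Nat.zero_le n) (fun i _ hi => hc i hi) f
  simp only [Nat.zero_add, Nat.sub_zero] at h2
  rw [← h2, Fin.sum_univ_eq_sum_range (fun i => ‖defect (Θ i) (chainProd Θ 0 i f)‖ ^ 2) n]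
  exact Finset.sum_congr rfl (fun t _ => by rw [Nat.zero_add])

lemma norm_regTuple_sub (n : ℕ) (hc : ∀ i, i < n → ‖Θ i‖ ≤ 1) (g h : E 0) :
    ‖regTuple Θ n g - regTuple Θ n h‖
      = ‖defect (chainProd Θ 0 n) g - defect (chainProd Θ 0 n) h‖ := by
  rw [regTuple_sub, ← map_sub]
  have hn : ‖chainProd Θ 0 n‖ ≤ 1 := norm_chainProd_le Θ (Nat.zero_le n) (fun i _ hi => hc i hi)
  have h1 : ‖regTuple Θ n (g - h)‖ ^ 2 = ‖defect (chainProd Θ 0 n) (g - h)‖ ^ 2 := by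
    rw [norm_regTuple_sq Θ n hc, aux_norm_defect_sq _ hn]
  rw [← Real.sqrt_sq (norm_nonneg (regTuple Θ n (g - h))),
    ← Real.sqrt_sq (norm_nonneg (defect (chainProd Θ 0 n) (g - h))), h1]

/-- cast between closures of ranges of defects along an index equality -/
def ccast {i i' : ℕ} (h : i = i') :
    clRan (defect (Θ i)) → clRan (defect (Θ i')) := by subst h; exact id

/-- restriction of a `k`-tuple to the window `[a, a+n)`, as a linear map -/
def restrL {k : ℕ} (a n : ℕ) :
    (PiLp 2 fun i : Fin k => clRan (defect (Θ ↑i)))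
      →ₗ[ℂ] (PiLp 2 fun t : Fin n => clRan (defect (Θ (a + ↑t)))) where
  toFun x := WithLp.toLp 2 (fun t => if h : a + ↑t < k then x ⟨a + ↑t, h⟩ else 0)
  map_add' x y := by
    ext t
    simp only [PiLp.add_apply]
    split_ifs with h
    · rfl
    · rw [add_zero]
  map_smul' c x := by
    ext t
    simp only [PiLp.smul_apply, RingHom.id_apply]
    split_ifs with h
    · rfl
    · rw [smul_zero]

/-- padding of a window tuple by zeros to a `k`-tuple -/
def pad {k : ℕ} (a n : ℕ) (y : PiLp 2 fun t : Fin n => clRan (defect (Θ (a + ↑t)))) :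
    PiLp 2 fun i : Fin k => clRan (defect (Θ ↑i)) :=
  WithLp.toLp 2 (fun i => if h : a ≤ ↑i ∧ ↑i - a < n
    then ccast Θ (show a + (↑i - a) = ↑i by omega) (y ⟨↑i - a, h.2⟩) else 0)

lemma restrL_apply {k : ℕ} (a n : ℕ)
    (x : PiLp 2 fun i : Fin k => clRan (defect (Θ ↑i))) (t : Fin n) :
    restrL Θ a n x t = if h : a + ↑t < k then x ⟨a + ↑t, h⟩ else 0 := rfl

lemma pad_apply_mk {k : ℕ} (a n : ℕ) (y : PiLp 2 fun t : Fin n => clRan (defect (Θ (a + ↑t))))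
    (v : ℕ) (hv : v < k) :
    pad Θ (k := k) a n y ⟨v, hv⟩ = if h : a ≤ v ∧ v - a < n
      then ccast Θ (show a + (v - a) = v by omega) (y ⟨v - a, h.2⟩) else 0 := rfl

lemma ccast_y {a n : ℕ} (y : PiLp 2 fun t : Fin n => clRan (defect (Θ (a + ↑t))))
    (s t : Fin n) (hst : (s : ℕ) = ↑t) (h : a + ↑s = a + ↑t) :
    ccast Θ h (y s) = y t := by
  have hst' : s = t := Fin.ext hst
  subst hst'
  rfl

lemma restrL_pad_same {k : ℕ} (a n : ℕ) (hk : a + n ≤ k)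
    (y : PiLp 2 fun t : Fin n => clRan (defect (Θ (a + ↑t)))) :
    restrL Θ a n (pad Θ (k := k) a n y) = y := by
  ext1 t
  have ht : (t : ℕ) < n := t.isLt
  have hak : a + ↑t < k := by omega
  rw [restrL_apply, dif_pos hak, pad_apply_mk, dif_pos ⟨Nat.le_add_right a ↑t, by omega⟩]
  exact ccast_y Θ y ⟨a + ↑t - a, by omega⟩ t (show a + ↑t - a = ↑t by omega) _

lemma restrL_pad_other {k : ℕ} (a n a' n' : ℕ) (hd : a' + n' ≤ a ∨ a + n ≤ a')
    (y : PiLp 2 fun t : Fin n => clRan (defect (Θ (a + ↑t)))) :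
    restrL Θ a' n' (pad Θ (k := k) a n y) = 0 := by
  ext t
  have ht : (t : ℕ) < n' := t.isLt
  rw [restrL_apply]
  split_ifs with h
  · rw [pad_apply_mk, dif_neg (by omega)]
    rfl
  · rfl

lemma sum_range_partition (φ : ℕ → ℝ) (r : ℕ) (j : ℕ → ℕ) (hj0 : j 0 = 0)
    (hmono : ∀ m, m < r → j m < j (m + 1)) :
    ∀ s, s ≤ r → ∑ i ∈ Finset.range (j s), φ i
      = ∑ m ∈ Finset.range s, ∑ t ∈ Finset.range (j (m + 1) - j m), φ (j m + t) := by
  intro s hs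
  induction s with
  | zero => simp [hj0]
  | succ s ih =>
      rw [Finset.sum_range_succ, ← ih (by omega)]
      have h1 : j s ≤ j (s + 1) := le_of_lt (hmono s (by omega))
      rw [← Finset.sum_Ico_eq_sum_range (f := φ) (m := j s) (n := j (s + 1)),
        Finset.range_eq_Ico, Finset.range_eq_Ico]
      exact (Finset.sum_Ico_consecutive φ (Nat.zero_le (j s)) h1).symm

end ChainAux

lemma snorm_sub {H : Type*} [NormedAddCommGroup H] [InnerProductSpace ℂ H]
    {S : Submodule ℂ H} (u v : S) : ‖u - v‖ = ‖(u : H) - (v : H)‖ := by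
  rw [← AddSubgroupClass.coe_sub]; rfl

section SplitLemma
variable {E : ℕ → Type*} [∀ n, NormedAddCommGroup (E n)] [∀ n, InnerProductSpace ℂ (E n)]
  [∀ n, CompleteSpace (E n)]
variable (Θ : ∀ n, E n →L[ℂ] E (n + 1))

lemma split_lemma {k r : ℕ} (j : ℕ → ℕ) (hj0 : j 0 = 0) (hjr : j r = k)
    (hmono : ∀ m, m < r → j m < j (m + 1)) (hb : ∀ m, m < r → j (m + 1) ≤ k)
    (f : E 0) (x : PiLp 2 fun i : Fin k => clRan (defect (Θ ↑i))) :
    ‖regTuple Θ k f - x‖ ^ 2 = ∑ m ∈ Finset.range r,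
      ‖regTuple (fun t => Θ (j m + t)) (j (m + 1) - j m) (chainProd Θ 0 (j m) f)
        - restrL Θ (j m) (j (m + 1) - j m) x‖ ^ 2 := by
  rw [PiLp.norm_sq_eq_of_L2]
  have hpart := sum_range_partition
    (fun i => if h : i < k then ‖(regTuple Θ k f - x) ⟨i, h⟩‖ ^ 2 else 0) r j hj0 hmono r le_rfl
  rw [hjr] at hpart
  have h1 : ∑ i : Fin k, ‖(regTuple Θ k f - x) i‖ ^ 2
      = ∑ i ∈ Finset.range k,
          (fun i => if h : i < k then ‖(regTuple Θ k f - x) ⟨i, h⟩‖ ^ 2 else 0) i := by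
    rw [← Fin.sum_univ_eq_sum_range]
    refine Finset.sum_congr rfl (fun i _ => ?_)
    symm
    exact dif_pos i.isLt
  rw [h1, hpart]
  refine Finset.sum_congr rfl (fun m hm => ?_)
  rw [Finset.mem_range] at hm
  rw [PiLp.norm_sq_eq_of_L2]
  have h2 : ∑ t : Fin (j (m + 1) - j m),
      ‖(regTuple (fun s => Θ (j m + s)) (j (m + 1) - j m) (chainProd Θ 0 (j m) f)
        - restrL Θ (j m) (j (m + 1) - j m) x) t‖ ^ 2
      = ∑ t ∈ Finset.range (j (m + 1) - j m),
          (fun t => if h : t < j (m + 1) - j m then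
            ‖(regTuple (fun s => Θ (j m + s)) (j (m + 1) - j m) (chainProd Θ 0 (j m) f)
              - restrL Θ (j m) (j (m + 1) - j m) x) ⟨t, h⟩‖ ^ 2 else 0) t := by
    rw [← Fin.sum_univ_eq_sum_range]
    refine Finset.sum_congr rfl (fun t _ => ?_)
    symm
    exact dif_pos t.isLt
  rw [h2]
  refine Finset.sum_congr rfl (fun t ht => ?_)
  rw [Finset.mem_range] at ht
  have hik : j m + t < k := by have := hb m hm; omega
  show (if h : j m + t < k then ‖(regTuple Θ k f - x) ⟨j m + t, h⟩‖ ^ 2 else 0)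
    = (if h : t < j (m + 1) - j m then
        ‖(regTuple (fun s => Θ (j m + s)) (j (m + 1) - j m) (chainProd Θ 0 (j m) f)
          - restrL Θ (j m) (j (m + 1) - j m) x) ⟨t, h⟩‖ ^ 2 else 0)
  rw [dif_pos hik, dif_pos ht]
  have hxc : x ⟨j m + t, hik⟩
      = restrL Θ (j m) (j (m + 1) - j m) x ⟨t, ht⟩ := by
    rw [restrL_apply, dif_pos (show j m + ↑(⟨t, ht⟩ : Fin (j (m+1) - j m)) < k from hik)]
  have hac : (regTuple Θ k f ⟨j m + t, hik⟩ : E (j m + t))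
      = (regTuple (fun s => Θ (j m + s)) (j (m + 1) - j m) (chainProd Θ 0 (j m) f)
          ⟨t, ht⟩ : E (j m + t)) := by
    show defect (Θ (j m + t)) (chainProd Θ 0 (j m + t) f)
      = defect (Θ (j m + t)) (chainProd (fun s => Θ (j m + s)) 0 t (chainProd Θ 0 (j m) f))
    rw [chainProd_shift Θ (j m) t,
      chainProd_comp Θ (Nat.zero_le (j m)) (Nat.le_add_right (j m) t)]
    rfl
  rw [PiLp.sub_apply, PiLp.sub_apply, snorm_sub, snorm_sub, hac, hxc]

end SplitLemma

lemma rdelta_le (r : ℕ) (ε : ℝ) (hε : 0 < ε) :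
    (r : ℝ) * (ε / (2 * ((r : ℝ) + 1))) ≤ ε / 2 := by
  have h1 : (0:ℝ) < 2 * ((r:ℝ) + 1) := by positivity
  rw [mul_div_assoc', div_le_div_iff₀ h1 two_pos]
  have h2 : (0:ℝ) ≤ (r:ℝ) := Nat.cast_nonneg r
  nlinarith

lemma rdelta_half (r : ℕ) (ε : ℝ) (hε : 0 < ε) :
    ε / (2 * ((r : ℝ) + 1)) ≤ ε / 2 := by
  have h1 : (0:ℝ) < 2 * ((r:ℝ) + 1) := by positivity
  rw [div_le_div_iff₀ h1 two_pos]
  have h2 : (0:ℝ) ≤ (r:ℝ) := Nat.cast_nonneg r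
  nlinarith

/-- For a chain of contractions `Θ_i : E_i → E_{i+1}` (`0`-based here),
`Θ := Θ_k ⋯ Θ_1`, and a partition `0 = j_0 < j_1 < ⋯ < j_r = k`: the factorization
`Θ = Θ_k ⋯ Θ_1` is `k`-regular iff the aggregated factorization `Θ = Θ_{J_r} ⋯ Θ_{J_1}`
is `r`-regular and each sub-factorization `Θ_{J_m} = Θ_{j_m} ⋯ Θ_{j_{m-1}+1}` is
`(j_m - j_{m-1})`-regular. -/
theorem isRegularFact_iff_partition {E : ℕ → Type*}
    [∀ n, NormedAddCommGroup (E n)] [∀ n, InnerProductSpace ℂ (E n)] [∀ n, CompleteSpace (E n)]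
    (k : ℕ) (hk : 2 ≤ k) (Θ : ∀ n, E n →L[ℂ] E (n + 1)) (hΘ : ∀ i < k, ‖Θ i‖ ≤ 1)
    (r : ℕ) (hr : 1 ≤ r) (j : ℕ → ℕ) (hj0 : j 0 = 0) (hjr : j r = k)
    (hmono : ∀ m < r, j m < j (m + 1)) :
    IsRegularFact Θ k ↔
      (IsRegularFact (E := fun m => E (j m)) (fun m => chainProd Θ (j m) (j (m + 1))) r ∧
        ∀ m < r, IsRegularFact (E := fun t => E (j m + t)) (fun t => Θ (j m + t))
          (j (m + 1) - j m)) := by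
  classical
  have jmono : ∀ m m' : ℕ, m ≤ m' → m' ≤ r → j m ≤ j m' := by
    intro m m' h h'
    induction m', h using Nat.le_induction with
    | base => exact le_rfl
    | succ m'' hm ih =>
        exact le_trans (ih (by omega)) (le_of_lt (hmono m'' (by omega)))
  have hb : ∀ m, m < r → j (m + 1) ≤ k := by
    intro m hm
    rw [← hjr]
    exact jmono (m + 1) r (by omega) le_rfl
  have hcseg : ∀ m, m < r → ∀ t, t < j (m + 1) - j m → ‖Θ (j m + t)‖ ≤ 1 := by
    intro m hm t ht
    exact hΘ _ (by have := hb m hm; omega)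
  have haggchain : ∀ m, m ≤ r →
      chainProd (E := fun m => E (j m)) (fun m' => chainProd Θ (j m') (j (m' + 1))) 0 m
        = chainProd Θ (j 0) (j m) := by
    intro m hm
    induction m with
    | zero => rw [chainProd_self, chainProd_self]
    | succ m ih =>
        rw [chainProd_succ _ (Nat.zero_le m), ih (by omega),
          ← chainProd_comp Θ (jmono 0 m (Nat.zero_le m) (by omega))
            (le_of_lt (hmono m (by omega)))]
  have K2 : ∀ m, m < r → ∀ g h : E (j m),
      ‖regTuple (fun t => Θ (j m + t)) (j (m + 1) - j m) g
          - regTuple (fun t => Θ (j m + t)) (j (m + 1) - j m) h‖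
        = ‖defect (chainProd Θ (j m) (j (m + 1))) g
            - defect (chainProd Θ (j m) (j (m + 1))) h‖ := by
    intro m hm g h
    rw [norm_regTuple_sub _ _ (hcseg m hm)]
    have e2 : j m + (j (m + 1) - j m) = j (m + 1) := by
      have := hmono m hm; omega
    rw [chainProd_shift Θ (j m), e2]
  have K3 : ∀ (f' : E (j 0)) (m : Fin r),
      ((regTuple (E := fun m => E (j m)) (fun m' => chainProd Θ (j m') (j (m' + 1))) r f') m
          : E (j ↑m))
        = defect (chainProd Θ (j ↑m) (j (↑m + 1)))
            (chainProd Θ 0 (j ↑m) (castCLM hj0 f')) := by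
    intro f' m
    show defect (chainProd Θ (j ↑m) (j (↑m + 1)))
        (chainProd (E := fun m => E (j m)) (fun m' => chainProd Θ (j m') (j (m' + 1))) 0 ↑m f')
      = _
    rw [haggchain ↑m (le_of_lt m.isLt), chainProd_cast Θ hj0]
  have K1 := split_lemma Θ j hj0 hjr hmono hb
  constructor
  · intro hreg
    constructor
    · -- aggregated factorization is regular
      refine Metric.denseRange_iff.mpr (fun y ε hε => ?_)
      have hδ : (0:ℝ) < ε / (2 * (r + 1)) := by positivity
      have happrox : ∀ m : Fin r, ∃ g : E (j ↑m),
          ‖defect (chainProd Θ (j ↑m) (j (↑m + 1))) g - ↑(y m)‖ < ε / (2 * (r + 1)) := by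
        intro m
        have hy : ((y m : E (j ↑m))) ∈
            closure ((LinearMap.range (defect (chainProd Θ (j ↑m) (j (↑m + 1)))
                : E (j ↑m) →ₗ[ℂ] E (j ↑m))
              : Submodule ℂ (E (j ↑m))) : Set (E (j ↑m))) := by
          rw [← Submodule.topologicalClosure_coe]
          exact (y m).2
        rw [Metric.mem_closure_iff] at hy
        obtain ⟨b, hb1, hb2⟩ := hy _ hδ
        rw [SetLike.mem_coe, LinearMap.mem_range] at hb1
        obtain ⟨g, rfl⟩ := hb1
        exact ⟨g, by rw [← dist_eq_norm, dist_comm]; exact hb2⟩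
      choose g hg using happrox
      set x : PiLp 2 fun i : Fin k => clRan (defect (Θ ↑i)) :=
        ∑ m : Fin r, pad Θ (k := k) (j ↑m) (j (↑m + 1) - j ↑m)
          (regTuple (fun t => Θ (j ↑m + t)) (j (↑m + 1) - j ↑m) (g m)) with hxdef
      obtain ⟨f, hf⟩ := Metric.denseRange_iff.mp hreg x (ε / 2) (by positivity)
      have hf' : ‖regTuple Θ k f - x‖ < ε / 2 := by
        rw [← norm_sub_rev, ← dist_eq_norm]; exact hf
      refine ⟨castCLM hj0.symm f, ?_⟩
      have hx : ∀ m : Fin r, restrL Θ (j ↑m) (j (↑m + 1) - j ↑m) x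
          = regTuple (fun t => Θ (j ↑m + t)) (j (↑m + 1) - j ↑m) (g m) := by
        intro m
        rw [hxdef, map_sum, Finset.sum_eq_single_of_mem m (Finset.mem_univ m)]
        · exact restrL_pad_same Θ _ _
            (by have := hb ↑m m.isLt; have := hmono ↑m m.isLt; omega) _
        · intro m' _ hne
          apply restrL_pad_other
          rcases Nat.lt_or_ge (↑m' : ℕ) ↑m with hlt | hge
          · right
            have h5 : j (↑m' + 1) ≤ j ↑m := jmono (↑m' + 1) ↑m (by omega) (le_of_lt m.isLt)
            have h6 := hmono ↑m' m'.isLt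
            omega
          · left
            have hlt' : (↑m : ℕ) < ↑m' := by
              rcases Nat.lt_or_ge (↑m : ℕ) ↑m' with h | h
              · exact h
              · exact absurd (Fin.ext (by omega)) (Ne.symm hne)
            have h5 : j (↑m + 1) ≤ j ↑m' := jmono (↑m + 1) ↑m' (by omega) (le_of_lt m'.isLt)
            have h6 := hmono ↑m m.isLt
            omega
      have hcomp : ∀ m : Fin r,
          ‖(regTuple (E := fun m => E (j m)) (fun m' => chainProd Θ (j m') (j (m' + 1))) r
              (castCLM hj0.symm f) - y) m‖
          ≤ ‖regTuple (fun t => Θ (j ↑m + t)) (j (↑m + 1) - j ↑m) (chainProd Θ 0 (j ↑m) f)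
              - restrL Θ (j ↑m) (j (↑m + 1) - j ↑m) x‖ + ε / (2 * (r + 1)) := by
        intro m
        rw [hx m, K2 ↑m m.isLt, PiLp.sub_apply, snorm_sub, K3, castCLM_castCLM]
        have tri : defect (chainProd Θ (j ↑m) (j (↑m + 1))) (chainProd Θ 0 (j ↑m) f) - ↑(y m)
            = (defect (chainProd Θ (j ↑m) (j (↑m + 1))) (chainProd Θ 0 (j ↑m) f)
                - defect (chainProd Θ (j ↑m) (j (↑m + 1))) (g m))
              + (defect (chainProd Θ (j ↑m) (j (↑m + 1))) (g m) - ↑(y m)) := by abel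
        rw [tri]
        exact le_trans (norm_add_le _ _) (by gcongr; exact le_of_lt (hg m))
      have hKsum : ∑ m : Fin r,
          ‖regTuple (fun t => Θ (j ↑m + t)) (j (↑m + 1) - j ↑m) (chainProd Θ 0 (j ↑m) f)
            - restrL Θ (j ↑m) (j (↑m + 1) - j ↑m) x‖ ^ 2 = ‖regTuple Θ k f - x‖ ^ 2 := by
        rw [K1 f x]
        exact Fin.sum_univ_eq_sum_range (fun m' =>
          ‖regTuple (fun t => Θ (j m' + t)) (j (m' + 1) - j m') (chainProd Θ 0 (j m') f)
            - restrL Θ (j m') (j (m' + 1) - j m') x‖ ^ 2) r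
      have hfin : ‖regTuple (E := fun m => E (j m)) (fun m' => chainProd Θ (j m') (j (m' + 1))) r
          (castCLM hj0.symm f) - y‖ ^ 2 < ε ^ 2 := by
        rw [PiLp.norm_sq_eq_of_L2]
        have hsum1 : ∑ m : Fin r,
            ‖(regTuple (E := fun m => E (j m)) (fun m' => chainProd Θ (j m') (j (m' + 1))) r
                (castCLM hj0.symm f) - y) m‖ ^ 2
            ≤ ∑ m : Fin r,
              (2 * ‖regTuple (fun t => Θ (j ↑m + t)) (j (↑m + 1) - j ↑m)
                  (chainProd Θ 0 (j ↑m) f)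
                - restrL Θ (j ↑m) (j (↑m + 1) - j ↑m) x‖ ^ 2
                + 2 * (ε / (2 * (r + 1))) ^ 2) := by
          refine Finset.sum_le_sum (fun m _ => ?_)
          have h1 := hcomp m
          have h2 : (0:ℝ) ≤ ‖(regTuple (E := fun m => E (j m))
              (fun m' => chainProd Θ (j m') (j (m' + 1))) r
              (castCLM hj0.symm f) - y) m‖ := norm_nonneg _
          have h2b : (0:ℝ) ≤ ‖regTuple (fun t => Θ (j ↑m + t)) (j (↑m + 1) - j ↑m)
              (chainProd Θ 0 (j ↑m) f) - restrL Θ (j ↑m) (j (↑m + 1) - j ↑m) x‖ :=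
            norm_nonneg _
          have h3 := pow_le_pow_left₀ h2 h1 2
          nlinarith [h3, sq_nonneg (‖regTuple (fun t => Θ (j ↑m + t)) (j (↑m + 1) - j ↑m)
              (chainProd Θ 0 (j ↑m) f) - restrL Θ (j ↑m) (j (↑m + 1) - j ↑m) x‖
              - ε / (2 * (↑r + 1)))]
        have hsum2 : ∑ m : Fin r,
            (2 * ‖regTuple (fun t => Θ (j ↑m + t)) (j (↑m + 1) - j ↑m)
                (chainProd Θ 0 (j ↑m) f)
              - restrL Θ (j ↑m) (j (↑m + 1) - j ↑m) x‖ ^ 2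
              + 2 * (ε / (2 * (r + 1))) ^ 2)
            = 2 * ‖regTuple Θ k f - x‖ ^ 2 + (r : ℝ) * (2 * (ε / (2 * (r + 1))) ^ 2) := by
          rw [Finset.sum_add_distrib, Finset.sum_const, Finset.card_univ, Fintype.card_fin,
            ← Finset.mul_sum, hKsum, nsmul_eq_mul]
        have hr0 : (0:ℝ) ≤ (r : ℝ) := Nat.cast_nonneg r
        have hrδ : (r : ℝ) * (ε / (2 * ((r : ℝ) + 1))) ≤ ε / 2 := rdelta_le r ε hε
        have hδ2 : ε / (2 * ((r : ℝ) + 1)) ≤ ε / 2 := rdelta_half r ε hε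
        calc ∑ m : Fin r, ‖(regTuple (E := fun m => E (j m))
              (fun m' => chainProd Θ (j m') (j (m' + 1))) r
              (castCLM hj0.symm f) - y) m‖ ^ 2
            ≤ 2 * ‖regTuple Θ k f - x‖ ^ 2 + (r : ℝ) * (2 * (ε / (2 * (r + 1))) ^ 2) := by
              rw [← hsum2]; exact hsum1
        _ < ε ^ 2 := by nlinarith [norm_nonneg (regTuple Θ k f - x), hf', hδ, hrδ, hδ2, hε]
      have hlt : ‖regTuple (E := fun m => E (j m)) (fun m' => chainProd Θ (j m') (j (m' + 1))) r
          (castCLM hj0.symm f) - y‖ < ε := by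
        nlinarith [norm_nonneg (regTuple (E := fun m => E (j m))
          (fun m' => chainProd Θ (j m') (j (m' + 1))) r (castCLM hj0.symm f) - y), hε]
      rw [dist_eq_norm, norm_sub_rev]
      exact hlt
    · -- segment factorizations are regular
      intro m hm
      refine Metric.denseRange_iff.mpr (fun xm ε hε => ?_)
      obtain ⟨f, hf⟩ := Metric.denseRange_iff.mp hreg
        (pad Θ (k := k) (j m) (j (m + 1) - j m) xm) ε hε
      have hf' : ‖regTuple Θ k f - pad Θ (k := k) (j m) (j (m + 1) - j m) xm‖ < ε := by
        rw [← norm_sub_rev, ← dist_eq_norm]; exact hf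
      refine ⟨chainProd Θ 0 (j m) f, ?_⟩
      have h2 : ‖regTuple (fun t => Θ (j m + t)) (j (m + 1) - j m) (chainProd Θ 0 (j m) f)
          - restrL Θ (j m) (j (m + 1) - j m)
              (pad Θ (k := k) (j m) (j (m + 1) - j m) xm)‖ ^ 2
          ≤ ‖regTuple Θ k f - pad Θ (k := k) (j m) (j (m + 1) - j m) xm‖ ^ 2 := by
        rw [K1 f _]
        exact Finset.single_le_sum (f := fun m' =>
          ‖regTuple (fun t => Θ (j m' + t)) (j (m' + 1) - j m') (chainProd Θ 0 (j m') f)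
            - restrL Θ (j m') (j (m' + 1) - j m')
                (pad Θ (k := k) (j m) (j (m + 1) - j m) xm)‖ ^ 2)
          (fun m' _ => sq_nonneg _) (Finset.mem_range.mpr hm)
      rw [restrL_pad_same Θ _ _
        (by have := hb m hm; have := hmono m hm; omega)] at h2
      rw [dist_eq_norm, norm_sub_rev]
      nlinarith [norm_nonneg (regTuple (fun t => Θ (j m + t)) (j (m + 1) - j m)
          (chainProd Θ 0 (j m) f) - xm),
        norm_nonneg (regTuple Θ k f - pad Θ (k := k) (j m) (j (m + 1) - j m) xm), hε]
  · rintro ⟨hA, hS⟩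
    refine Metric.denseRange_iff.mpr (fun x ε hε => ?_)
    have hδ : (0:ℝ) < ε / (2 * (r + 1)) := by positivity
    have hgm : ∀ m : Fin r, ∃ gm : E (j ↑m),
        ‖regTuple (fun t => Θ (j ↑m + t)) (j (↑m + 1) - j ↑m) gm
          - restrL Θ (j ↑m) (j (↑m + 1) - j ↑m) x‖ < ε / (2 * (r + 1)) := by
      intro m
      obtain ⟨gm, hgm2⟩ := Metric.denseRange_iff.mp (hS ↑m m.isLt)
        (restrL Θ (j ↑m) (j (↑m + 1) - j ↑m) x) _ hδ
      exact ⟨gm, by rw [← norm_sub_rev, ← dist_eq_norm]; exact hgm2⟩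
    choose g hg using hgm
    set y : PiLp 2 fun m : Fin r => clRan (defect (chainProd Θ (j ↑m) (j (↑m + 1)))) :=
      WithLp.toLp 2 (fun m => ⟨defect (chainProd Θ (j ↑m) (j (↑m + 1))) (g m), defect_mem_clRan _ _⟩)
      with hydef
    obtain ⟨f', hf'⟩ := Metric.denseRange_iff.mp hA y (ε / 2) (by positivity)
    have hf'' : ‖regTuple (E := fun m => E (j m)) (fun m' => chainProd Θ (j m') (j (m' + 1))) r
        f' - y‖ < ε / 2 := by
      rw [← norm_sub_rev, ← dist_eq_norm]; exact hf'
    refine ⟨castCLM hj0 f', ?_⟩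
    have hcomp : ∀ m : Fin r,
        ‖regTuple (fun t => Θ (j ↑m + t)) (j (↑m + 1) - j ↑m)
            (chainProd Θ 0 (j ↑m) (castCLM hj0 f'))
          - regTuple (fun t => Θ (j ↑m + t)) (j (↑m + 1) - j ↑m) (g m)‖
        = ‖(regTuple (E := fun m => E (j m)) (fun m' => chainProd Θ (j m') (j (m' + 1))) r f'
            - y) m‖ := by
      intro m
      rw [K2 ↑m m.isLt, PiLp.sub_apply, snorm_sub, K3, hydef]
    have hest : ∀ m : Fin r,
        ‖regTuple (fun t => Θ (j ↑m + t)) (j (↑m + 1) - j ↑m)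
            (chainProd Θ 0 (j ↑m) (castCLM hj0 f'))
          - restrL Θ (j ↑m) (j (↑m + 1) - j ↑m) x‖ ^ 2
        ≤ 2 * ‖(regTuple (E := fun m => E (j m)) (fun m' => chainProd Θ (j m') (j (m' + 1))) r f'
            - y) m‖ ^ 2 + 2 * (ε / (2 * (r + 1))) ^ 2 := by
      intro m
      have h1 := hg m
      have h2 := hcomp m
      have htri : ‖regTuple (fun t => Θ (j ↑m + t)) (j (↑m + 1) - j ↑m)
            (chainProd Θ 0 (j ↑m) (castCLM hj0 f'))
          - restrL Θ (j ↑m) (j (↑m + 1) - j ↑m) x‖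
          ≤ ‖regTuple (fun t => Θ (j ↑m + t)) (j (↑m + 1) - j ↑m)
              (chainProd Θ 0 (j ↑m) (castCLM hj0 f'))
            - regTuple (fun t => Θ (j ↑m + t)) (j (↑m + 1) - j ↑m) (g m)‖
          + ‖regTuple (fun t => Θ (j ↑m + t)) (j (↑m + 1) - j ↑m) (g m)
            - restrL Θ (j ↑m) (j (↑m + 1) - j ↑m) x‖ := by
        have tri : regTuple (fun t => Θ (j ↑m + t)) (j (↑m + 1) - j ↑m)
              (chainProd Θ 0 (j ↑m) (castCLM hj0 f'))
            - restrL Θ (j ↑m) (j (↑m + 1) - j ↑m) x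
            = (regTuple (fun t => Θ (j ↑m + t)) (j (↑m + 1) - j ↑m)
                (chainProd Θ 0 (j ↑m) (castCLM hj0 f'))
              - regTuple (fun t => Θ (j ↑m + t)) (j (↑m + 1) - j ↑m) (g m))
            + (regTuple (fun t => Θ (j ↑m + t)) (j (↑m + 1) - j ↑m) (g m)
              - restrL Θ (j ↑m) (j (↑m + 1) - j ↑m) x) := by abel
        rw [tri]
        exact norm_add_le _ _
      rw [h2] at htri
      have h4 : ‖regTuple (fun t => Θ (j ↑m + t)) (j (↑m + 1) - j ↑m)
            (chainProd Θ 0 (j ↑m) (castCLM hj0 f'))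
          - restrL Θ (j ↑m) (j (↑m + 1) - j ↑m) x‖
          ≤ ‖(regTuple (E := fun m => E (j m))
              (fun m' => chainProd Θ (j m') (j (m' + 1))) r f' - y) m‖
            + ε / (2 * (↑r + 1)) := le_trans htri (by linarith [h1])
      have h5 := pow_le_pow_left₀ (norm_nonneg (regTuple (fun t => Θ (j ↑m + t))
          (j (↑m + 1) - j ↑m) (chainProd Θ 0 (j ↑m) (castCLM hj0 f'))
          - restrL Θ (j ↑m) (j (↑m + 1) - j ↑m) x)) h4 2
      nlinarith [h5, sq_nonneg (‖(regTuple (E := fun m => E (j m))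
          (fun m' => chainProd Θ (j m') (j (m' + 1))) r f' - y) m‖
          - ε / (2 * (↑r + 1)))]
    have hfin : ‖regTuple Θ k (castCLM hj0 f') - x‖ ^ 2 < ε ^ 2 := by
      rw [K1 (castCLM hj0 f') x,
        ← Fin.sum_univ_eq_sum_range (fun m' =>
          ‖regTuple (fun t => Θ (j m' + t)) (j (m' + 1) - j m')
              (chainProd Θ 0 (j m') (castCLM hj0 f'))
            - restrL Θ (j m') (j (m' + 1) - j m') x‖ ^ 2) r]
      have hsum1 := Finset.sum_le_sum (fun m (_ : m ∈ Finset.univ) => hest m)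
      have hsum2 : ∑ m : Fin r,
          (2 * ‖(regTuple (E := fun m => E (j m)) (fun m' => chainProd Θ (j m') (j (m' + 1)))
              r f' - y) m‖ ^ 2 + 2 * (ε / (2 * (r + 1))) ^ 2)
          = 2 * ‖regTuple (E := fun m => E (j m)) (fun m' => chainProd Θ (j m') (j (m' + 1)))
              r f' - y‖ ^ 2 + (r : ℝ) * (2 * (ε / (2 * (r + 1))) ^ 2) := by
        rw [Finset.sum_add_distrib, Finset.sum_const, Finset.card_univ, Fintype.card_fin,
          ← Finset.mul_sum, ← PiLp.norm_sq_eq_of_L2, nsmul_eq_mul]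
      rw [hsum2] at hsum1
      have hr0 : (0:ℝ) ≤ (r : ℝ) := Nat.cast_nonneg r
      have hrδ : (r : ℝ) * (ε / (2 * ((r : ℝ) + 1))) ≤ ε / 2 := rdelta_le r ε hε
      have hδ2 : ε / (2 * ((r : ℝ) + 1)) ≤ ε / 2 := rdelta_half r ε hε
      calc ∑ m : Fin r, ‖regTuple (fun t => Θ (j ↑m + t)) (j (↑m + 1) - j ↑m)
              (chainProd Θ 0 (j ↑m) (castCLM hj0 f'))
            - restrL Θ (j ↑m) (j (↑m + 1) - j ↑m) x‖ ^ 2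
          ≤ 2 * ‖regTuple (E := fun m => E (j m)) (fun m' => chainProd Θ (j m') (j (m' + 1)))
              r f' - y‖ ^ 2 + (r : ℝ) * (2 * (ε / (2 * (r + 1))) ^ 2) := hsum1
      _ < ε ^ 2 := by
          nlinarith [norm_nonneg (regTuple (E := fun m => E (j m))
            (fun m' => chainProd Θ (j m') (j (m' + 1))) r f' - y), hf'', hδ, hrδ, hδ2, hε]
    rw [dist_eq_norm, norm_sub_rev]
    nlinarith [norm_nonneg (regTuple Θ k (castCLM hj0 f') - x), hε]


end
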